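/- Classification of Boolean degree 1 functions on the multislice: let k_1,...,k_m ≥ 1 sum to n and let D = { i : k_i = 1 }. Assume the Ellis–Friedgut–Pilpel classification of Boolean degree 1 functions on S_n. Then every Boolean degree 1 function f on the multislice M(k_1,...,k_m) either depends only on the color of a single coordinate (i.e. f(x) = φ(x_i) for some i ∈ [n] and φ : [m] → {0,1}), or depends only on which coordinate receives a color c ∈ D (i.e. f(x) = 1_{the unique coordinate colored c lies in I} for some c ∈ D and I ⊆ [n]). -/

import Mathlib

/-- Fiber of the first projection of a sigma type. -/
def sigmaFstEquiv {m : Type*} {β : m → Type*} (j : m) :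
    {s : Σ i, β i // s.1 = j} ≃ β j where
  toFun s := cast (congrArg β s.2) s.1.2
  invFun b := ⟨⟨j, b⟩, rfl⟩
  left_inv := by rintro ⟨⟨i, b⟩, rfl⟩; rfl
  right_inv b := rfl

lemma fiber_card_of_equiv {n m : ℕ} {K : Fin m → ℕ}
    (e : Fin n ≃ Σ j, Fin (K j)) (j : Fin m) :
    (Finset.univ.filter fun i => (e i).1 = j).card = K j := by
  classical
  have h := Fintype.card_congr
    ((e.subtypeEquiv (fun i => Iff.rfl : ∀ i, (e i).1 = j ↔ (e i).1 = j)).trans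
      (sigmaFstEquiv j))
  simpa [Fintype.card_subtype] using h

/-- An equiv to the sigma type whose first component is a given function with
prescribed fiber sizes. -/
noncomputable def funEquiv {n m : ℕ} {K : Fin m → ℕ} (g : Fin n → Fin m)
    (hg : ∀ j, (Finset.univ.filter fun i => g i = j).card = K j) :
    Fin n ≃ Σ j, Fin (K j) :=
  (Equiv.sigmaFiberEquiv g).symm.trans
    (Equiv.sigmaCongrRight fun j =>
      Fintype.equivFinOfCardEq (by classical rw [Fintype.card_subtype, hg]))

lemma funEquiv_fst {n m : ℕ} {K : Fin m → ℕ} (g : Fin n → Fin m)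
    (hg : ∀ j, (Finset.univ.filter fun i => g i = j).card = K j) (i : Fin n) :
    (funEquiv g hg i).1 = g i := rfl

/-- The multislice `M(k_1,…,k_m)`: colorings `x : [n] → [m]` in which exactly
`K j` coordinates receive the color `j`. -/
def MSlice (n m : ℕ) (K : Fin m → ℕ) :=
  {x : Fin n → Fin m // ∀ j, (Finset.univ.filter fun i => x i = j).card = K j}

/-- A Boolean function on the multislice has degree 1 if it is a real affine
combination of the indicator entries `x_{ij} = 1_{x(i) = j}`. -/
def MSDegOne {n m : ℕ} {K : Fin m → ℕ} (f : MSlice n m K → Bool) : Prop :=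
  ∃ (c : ℝ) (C : Fin n → Fin m → ℝ), ∀ x : MSlice n m K,
    (if f x then (1 : ℝ) else 0) =
      c + ∑ i, ∑ j, C i j * (if x.val i = j then (1 : ℝ) else 0)

/-- A Boolean function on `S_n` has degree 1 if it is a real affine combination
of the permutation matrix entries. -/
def PermDegOne {n : ℕ} (F : Equiv.Perm (Fin n) → Bool) : Prop :=
  ∃ (c : ℝ) (C : Fin n → Fin n → ℝ), ∀ π : Equiv.Perm (Fin n),
    (if F π then (1 : ℝ) else 0) =
      c + ∑ i, ∑ j, C i j * (if π i = j then (1 : ℝ) else 0)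

/-- Classification of Boolean degree 1 functions on the
multislice, assuming the Ellis–Friedgut–Pilpel classification on `S_n`:
every Boolean degree 1 function on `M(k_1,…,k_m)` either depends only on the
color of a single coordinate, or depends only on which coordinate receives a
color `c` with `k_c = 1`. -/
theorem boolean_degree_one_multislice (n m : ℕ) (K : Fin m → ℕ)
    (hK : ∀ j, 1 ≤ K j) (hsum : ∑ j, K j = n)
    (EFP : ∀ F : Equiv.Perm (Fin n) → Bool, PermDegOne F →
      (∃ (i : Fin n) (J : Finset (Fin n)), ∀ π : Equiv.Perm (Fin n),
          (F π = true ↔ π i ∈ J)) ∨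
      (∃ (j : Fin n) (I : Finset (Fin n)), ∀ π : Equiv.Perm (Fin n),
          (F π = true ↔ π⁻¹ j ∈ I)))
    (f : MSlice n m K → Bool) (hdeg : MSDegOne f) :
    (∃ (i : Fin n) (φ : Fin m → Bool), ∀ x : MSlice n m K, f x = φ (x.val i)) ∨
    (∃ c : Fin m, K c = 1 ∧ ∃ I : Finset (Fin n), ∀ x : MSlice n m K,
        (f x = true ↔ ∃ i ∈ I, x.val i = c)) := by
  classical
  obtain ⟨c0, C, hC⟩ := hdeg
  have e0 : Fin n ≃ Σ j, Fin (K j) := Fintype.equivOfCardEq (by simp [hsum])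
  set col : Fin n → Fin m := fun i => (e0 i).1 with hcoldef
  have hcol : ∀ (e : Fin n ≃ Fin n) j,
      (Finset.univ.filter fun i => col (e i) = j).card = K j := by
    intro e j
    exact fiber_card_of_equiv (e.trans e0) j
  have hcol0 : ∀ j, (Finset.univ.filter fun i => col i = j).card = K j :=
    fun j => fiber_card_of_equiv e0 j
  set toX : Equiv.Perm (Fin n) → MSlice n m K :=
    fun π => ⟨fun i => col (π i), hcol π⟩ with htoXdef
  set F : Equiv.Perm (Fin n) → Bool := fun π => f (toX π) with hFdef
  -- every multislice point arises from a permutation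
  have hrep : ∀ x : MSlice n m K, ∃ π, toX π = x := by
    intro x
    refine ⟨(funEquiv x.val x.prop).trans e0.symm, Subtype.ext (funext fun i => ?_)⟩
    show (e0 (e0.symm (funEquiv x.val x.prop i))).1 = x.val i
    rw [e0.apply_symm_apply]
    exact funEquiv_fst x.val x.prop i
  -- F is degree one
  have hFdeg : PermDegOne F := by
    refine ⟨c0, fun i p => C i (col p), fun π => ?_⟩
    have h1 : ∀ (i : Fin n) (v : Fin m),
        ∑ j, C i j * (if v = j then (1:ℝ) else 0) = C i v := by
      intro i v
      simp [mul_ite, Finset.sum_ite_eq]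
    have h2 : ∀ (i : Fin n) (w : Fin n),
        ∑ p, C i (col p) * (if w = p then (1:ℝ) else 0) = C i (col w) := by
      intro i w
      simp [mul_ite, Finset.sum_ite_eq]
    have := hC (toX π)
    show (if f (toX π) then (1:ℝ) else 0) = _
    rw [this]
    congr 1
    refine Finset.sum_congr rfl fun i _ => ?_
    rw [h2 i (π i)]
    exact h1 i (col (π i))
  -- well-definedness under equal colorings
  have hwd : ∀ π σ : Equiv.Perm (Fin n), (∀ i, col (π i) = col (σ i)) → F π = F σ := by
    intro π σ h
    show f (toX π) = f (toX σ)
    congr 1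
    exact Subtype.ext (funext h)
  -- swapping equally-colored positions doesn't change F
  have hswap : ∀ (p q : Fin n), col p = col q →
      ∀ π, F (Equiv.swap p q * π) = F π := by
    intro p q hpq π
    apply hwd
    intro i
    simp only [Equiv.Perm.mul_apply]
    rw [Equiv.swap_apply_def]
    split_ifs with h1 h2
    · rw [h1, hpq]
    · rw [h2, hpq]
    · rfl
  rcases EFP F hFdeg with ⟨i, J, hJ⟩ | ⟨j0, I, hI⟩
  · -- first case: dictatorship on coordinate i
    left
    have hmem : ∀ p q : Fin n, col p = col q → (p ∈ J ↔ q ∈ J) := by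
      intro p q hpq
      have h1 := hJ (Equiv.swap i p)
      have h2 := hJ (Equiv.swap p q * Equiv.swap i p)
      rw [hswap p q hpq] at h2
      rw [Equiv.swap_apply_left] at h1
      simp only [Equiv.Perm.mul_apply, Equiv.swap_apply_left] at h2
      exact h1.symm.trans h2
    have hrepc : ∀ j : Fin m, ∃ p, col p = j := by
      intro j
      have : 0 < (Finset.univ.filter fun i => col i = j).card := by
        rw [hcol0 j]; exact hK j
      obtain ⟨p, hp⟩ := Finset.card_pos.mp this
      exact ⟨p, (Finset.mem_filter.mp hp).2⟩
    choose rep hrepcol using hrepc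
    refine ⟨i, fun j => decide (rep j ∈ J), fun x => ?_⟩
    obtain ⟨π, rfl⟩ := hrep x
    have hx : (toX π).val i = col (π i) := rfl
    rw [hx]
    have : f (toX π) = F π := rfl
    rw [this]
    rw [Bool.eq_iff_iff, hJ π, decide_eq_true_iff]
    exact hmem (π i) (rep (col (π i))) (hrepcol (col (π i))).symm
  · -- second case
    by_cases hc1 : K (col j0) = 1
    · right
      refine ⟨col j0, hc1, I, fun x => ?_⟩
      obtain ⟨π, rfl⟩ := hrep x
      have hfib : ∀ p : Fin n, col p = col j0 ↔ p = j0 := by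
        intro p
        have hcard : (Finset.univ.filter fun i => col i = col j0).card = 1 := by
          rw [hcol0]; exact hc1
        obtain ⟨a, ha⟩ := Finset.card_eq_one.mp hcard
        have hj0 : j0 ∈ Finset.univ.filter fun i => col i = col j0 := by
          simp
        rw [ha, Finset.mem_singleton] at hj0
        constructor
        · intro hp
          have : p ∈ Finset.univ.filter fun i => col i = col j0 := by
            simp [hp]
          rw [ha, Finset.mem_singleton] at this
          rw [this, hj0]
        · rintro rfl; rfl
      have : f (toX π) = F π := rfl
      rw [this, hI π]
      constructor
      · intro h
        exact ⟨π⁻¹ j0, h, by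
          show col (π (π⁻¹ j0)) = col j0
          rw [show π (π⁻¹ j0) = j0 from (Equiv.eq_symm_apply π).mp rfl]⟩
      · rintro ⟨i, hiI, hi⟩
        have : π i = j0 := (hfib (π i)).mp hi
        have : i = π⁻¹ j0 := by rw [← this, show π⁻¹ (π i) = i from Equiv.Perm.inv_eq_iff_eq.mpr rfl]
        rwa [← this]
    · -- K (col j0) ≥ 2 : f is constant
      left
      have hcard2 : 1 < (Finset.univ.filter fun i => col i = col j0).card := by
        rw [hcol0]
        have := hK (col j0)
        omega
      obtain ⟨q, hqmem, hqne⟩ := Finset.exists_mem_ne hcard2 j0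
      have hcq : col q = col j0 := (Finset.mem_filter.mp hqmem).2
      have key : ∀ π : Equiv.Perm (Fin n), (π⁻¹ j0 ∈ I ↔ π⁻¹ q ∈ I) := by
        intro π
        have h1 := hI π
        have h2 := hI (Equiv.swap j0 q * π)
        rw [hswap j0 q hcq.symm π] at h2
        have h3 : (Equiv.swap j0 q * π)⁻¹ j0 = π⁻¹ q := by
          rw [mul_inv_rev]
          simp [Equiv.swap_inv, Equiv.Perm.mul_apply]
        rw [h3] at h2
        rw [← h1, h2]
      have pairkey : ∀ a b : Fin n, a ≠ b → (a ∈ I ↔ b ∈ I) := by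
        intro a b hab
        set b' := Equiv.swap a j0 b with hb'def
        have hb' : b' ≠ j0 := by
          intro h
          have h2 : Equiv.swap a j0 b = Equiv.swap a j0 a := by
            rw [Equiv.swap_apply_left, ← hb'def]
            exact h
          exact Ne.symm hab ((Equiv.swap a j0).injective h2)
        set π := Equiv.swap b' q * Equiv.swap a j0 with hπdef
        have hπa : π a = j0 := by
          rw [hπdef]
          simp only [Equiv.Perm.mul_apply, Equiv.swap_apply_left]
          rw [Equiv.swap_apply_of_ne_of_ne hb'.symm (Ne.symm hqne)]
        have hπb : π b = q := by
          rw [hπdef]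
          simp only [Equiv.Perm.mul_apply, ← hb'def]
          rw [Equiv.swap_apply_left]
        have ha : π⁻¹ j0 = a := by rw [← hπa, show π⁻¹ (π a) = a from Equiv.Perm.inv_eq_iff_eq.mpr rfl]
        have hb : π⁻¹ q = b := by rw [← hπb, show π⁻¹ (π b) = b from Equiv.Perm.inv_eq_iff_eq.mpr rfl]
        have := key π
        rwa [ha, hb] at this
      have hconst : ∀ π : Equiv.Perm (Fin n), F π = F 1 := by
        intro π
        rw [Bool.eq_iff_iff, hI π, hI 1]
        have h1 : (1 : Equiv.Perm (Fin n))⁻¹ j0 = j0 := rfl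
        rw [h1]
        by_cases h : π⁻¹ j0 = j0
        · rw [h]
        · exact pairkey _ _ h
      refine ⟨j0, fun _ => F 1, fun x => ?_⟩
      obtain ⟨π, rfl⟩ := hrep x
      exact hconst π
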